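/- Let d = 4, ℓ = 5/3, and γ ∈ (ℓ^{-1/2}, 1). Given any (Z₂, V₂) with Z₂ > 0 and (Z₂, V₂) ∈ Ω_far, the solution of the (Z,V)-ODE with initial value V(Z₂) = V₂ extends to a smooth solution V ∈ C^∞([Z₂, ∞)) satisfying (Z, V(Z)) ∈ Ω_far for every Z ≥ Z₂, and the limit V_∞ = lim_{Z→∞} V(Z) exists with V_∞ ∈ (−1, 1). -/

import Mathlib

noncomputable section

open Set

namespace Stmt19

/-- `Δ_V(Z,V)` for `d = 4`, `ℓ = 5/3`, with parameter `γ`. -/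
def DelV (γ Z V : ℝ) : ℝ :=
  (4 - 1) * (1 - V ^ 2) * ((1 / (γ + 1)) * (1 - V ^ 2) * Z - V * (1 - V * Z))

/-- `Δ_Z(Z,V)` for `ℓ = 5/3`. -/
def DelZ (Z V : ℝ) : ℝ := Z * ((1 - Z * V) ^ 2 - (5/3) * (V - Z) ^ 2)

/-- `Z_V(V) = (1+γ)V/(1+γV²)`. -/
def ZVfun (γ V : ℝ) : ℝ := (1 + γ) * V / (1 + γ * V ^ 2)

/-- `Z₊(V) = (√ℓ V + 1)/(V + √ℓ)`. -/
def Zplus (V : ℝ) : ℝ := (Real.sqrt (5/3) * V + 1) / (V + Real.sqrt (5/3))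

/-- Membership in the far-field region `Ω_far`. -/
def memOmegaFar (γ Z V : ℝ) : Prop :=
  V ∈ Ioo (-1 : ℝ) 1 ∧ Zplus V < Z ∧ ZVfun γ V < Z ∧ V < Z

local notation "sl" => Real.sqrt (5/3)

lemma sl_sq : sl ^ 2 = 5/3 := Real.sq_sqrt (by norm_num)

lemma one_lt_sl : 1 < sl := by
  rw [show (1:ℝ) = Real.sqrt 1 by simp]
  exact Real.sqrt_lt_sqrt (by norm_num) (by norm_num)

def Nf (γ s v : ℝ) : ℝ := 3 * (1 - v^2) * ((1 + γ*v^2)/(γ+1) + v*s)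

def Dq (s v : ℝ) : ℝ := (s+v)^2 - (5/3)*(1+v*s)^2

def Gf (γ s v : ℝ) : ℝ := Nf γ s v / Dq s v

def gf (γ s v : ℝ) : ℝ := (3 * (1 - v) * ((1 + γ*v^2)/(γ+1) + v*s)) / Dq s v

lemma Gf_eq_one_add_mul (γ s v : ℝ) : Gf γ s v = (1+v) * gf γ s v := by
  unfold Gf gf
  rw [← mul_div_assoc]
  congr 1
  unfold Nf; ring

section Region

variable {γ Z₂ b s v : ℝ}
variable (hγ0 : 0 < γ) (hγu : γ < 1) (hZ₂ : 0 < Z₂) (hb1 : b < 1) (hbm : -1 < b)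
variable (hZpb : Zplus b < Z₂) (hZVb : ZVfun γ b < Z₂)
variable (hs : s ∈ Icc (-Z₂⁻¹) 0) (hv : v ∈ Icc (-1) b)

include hZ₂ hb1 hbm hZpb hs hv in
lemma B_pos : 0 < s*(1+sl*v) + (v+sl) := by
  have h1 := one_lt_sl
  have hvsl : 0 < v + sl := by nlinarith [hv.1]
  rcases le_or_gt 0 (1 + sl*v) with hc | hc
  · have hzpv : Zplus v ≤ Zplus b := by
      unfold Zplus
      rw [div_le_div_iff₀ hvsl (by nlinarith)]
      nlinarith [sl_sq, hv.2]
    have hzv : Zplus v < Z₂ := lt_of_le_of_lt hzpv hZpb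
    have key : 0 < -Z₂⁻¹*(1+sl*v) + (v+sl) := by
      unfold Zplus at hzv
      rw [div_lt_iff₀ hvsl] at hzv
      have h3 : (1+sl*v) < Z₂*(v+sl) := by nlinarith
      have h2 : Z₂⁻¹ * (1+sl*v) < Z₂⁻¹ * (Z₂*(v+sl)) :=
        mul_lt_mul_of_pos_left h3 (by positivity)
      rw [inv_mul_cancel_left₀ (ne_of_gt hZ₂)] at h2
      linarith
    have : -Z₂⁻¹*(1+sl*v) ≤ s*(1+sl*v) := mul_le_mul_of_nonneg_right hs.1 hc
    linarith
  · nlinarith [mul_nonneg (neg_nonneg.2 hs.2) (neg_nonneg.2 hc.le)]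

include hZ₂ hb1 hbm hZpb hs hv in
lemma A_neg : s*(1-sl*v) + (v-sl) < 0 := by
  have h1 := one_lt_sl
  rcases le_or_gt 0 (1 - sl*v) with hc | hc
  · nlinarith [mul_nonneg (neg_nonneg.2 hs.2) hc, hv.2]
  · have hv0 : 0 < v := by nlinarith
    have hv1 : v < 1 := lt_of_le_of_lt hv.2 hb1
    have hslv : 0 < sl - v := by nlinarith
    have hvsl : 0 < v + sl := by nlinarith
    have hzmp : (sl*v - 1)/(sl - v) < Zplus b := by
      have h2 : (sl*v-1)/(sl-v) < Zplus v := by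
        unfold Zplus
        rw [div_lt_div_iff₀ hslv hvsl]
        nlinarith [sl_sq]
      refine lt_of_lt_of_le h2 ?_
      unfold Zplus
      rw [div_le_div_iff₀ hvsl (by nlinarith)]
      nlinarith [sl_sq, hv.2]
    have hzv : (sl*v-1)/(sl-v) < Z₂ := lt_of_lt_of_le hzmp hZpb.le
    rw [div_lt_iff₀ hslv] at hzv
    have key : -Z₂⁻¹*(1-sl*v) + (v-sl) < 0 := by
      have h3 : sl*v - 1 < Z₂*(sl-v) := by nlinarith
      have h2 : Z₂⁻¹ * (sl*v-1) < Z₂⁻¹ * (Z₂*(sl-v)) :=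
        mul_lt_mul_of_pos_left h3 (by positivity)
      rw [inv_mul_cancel_left₀ (ne_of_gt hZ₂)] at h2
      nlinarith
    have : s*(1-sl*v) ≤ -Z₂⁻¹*(1-sl*v) := by
      have := mul_le_mul_of_nonpos_right hs.1 hc.le
      linarith [this]
    linarith

include hZ₂ hb1 hbm hZpb hs hv in
lemma Dq_neg : Dq s v < 0 := by
  have hA := A_neg hZ₂ hb1 hbm hZpb hs hv
  have hB := B_pos hZ₂ hb1 hbm hZpb hs hv
  have hfac : Dq s v = (s*(1-sl*v) + (v-sl)) * (s*(1+sl*v) + (v+sl)) := by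
    unfold Dq
    linear_combination ((1+v*s)^2) * sl_sq
  rw [hfac]
  exact mul_neg_of_neg_of_pos hA hB

include hγ0 hγu hZ₂ hb1 hZVb hs hv in
lemma cvs_pos : 0 < (1 + γ*v^2)/(γ+1) + v*s := by
  have hγ1 : 0 < γ + 1 := by linarith
  rcases le_or_gt v 0 with hc | hc
  · have h1 : 0 ≤ v*s := by nlinarith [mul_nonneg (neg_nonneg.2 hc) (neg_nonneg.2 hs.2)]
    have h2 : 0 < (1 + γ*v^2)/(γ+1) := by positivity
    linarith
  · have hzv : ZVfun γ v ≤ ZVfun γ b := by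
      unfold ZVfun
      rw [div_le_div_iff₀ (by positivity) (by positivity)]
      have hb0 : 0 < b := lt_of_lt_of_le hc hv.2
      have hv1 : v < 1 := lt_of_le_of_lt hv.2 hb1
      have hvb : v*b < 1 := by nlinarith
      have h1 : γ*v*b < 1 := by nlinarith [mul_pos hc hb0]
      nlinarith [mul_nonneg (mul_nonneg (by linarith : (0:ℝ) ≤ 1+γ)
        (sub_nonneg.2 hv.2)) (by linarith : (0:ℝ) ≤ 1 - γ*v*b)]
    have hz : ZVfun γ v < Z₂ := lt_of_le_of_lt hzv hZVb
    unfold ZVfun at hz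
    rw [div_lt_iff₀ (by positivity)] at hz
    have h2 : Z₂⁻¹ * ((1+γ)*v) < Z₂⁻¹ * (Z₂ * (1 + γ*v^2)) :=
      mul_lt_mul_of_pos_left hz (by positivity)
    rw [inv_mul_cancel_left₀ (ne_of_gt hZ₂)] at h2
    have h3 : v * (-Z₂⁻¹) ≤ v*s := mul_le_mul_of_nonneg_left hs.1 hc.le
    have h4 : v * Z₂⁻¹ < (1 + γ*v^2)/(γ+1) := by
      rw [lt_div_iff₀ hγ1]; nlinarith
    linarith

include hγ0 hγu hZ₂ hb1 hbm hZpb hZVb hs hv in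
lemma Gf_nonpos : Gf γ s v ≤ 0 := by
  have hD := Dq_neg hZ₂ hb1 hbm hZpb hs hv
  have hc := cvs_pos hγ0 hγu hZ₂ hb1 hZVb hs hv
  have hN : 0 ≤ Nf γ s v := by
    unfold Nf
    have : (0:ℝ) ≤ 1 - v^2 := by nlinarith [hv.1, hv.2]
    positivity
  unfold Gf
  exact div_nonpos_of_nonneg_of_nonpos hN hD.le

end Region


def Nv (γ s v : ℝ) : ℝ := 3*(-(2*v))*((1+γ*v^2)/(γ+1) + v*s) + 3*(1-v^2)*((2*γ*v)/(γ+1) + s)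
def Dv (s v : ℝ) : ℝ := 2*(s+v) - (5/3)*(2*(1+v*s)*s)
def GV (γ s v : ℝ) : ℝ := (Nv γ s v * Dq s v - Nf γ s v * Dv s v) / (Dq s v)^2

lemma hasDerivAt_Nf (γ s v : ℝ) : HasDerivAt (fun x => Nf γ s x) (Nv γ s v) v := by
  have h1 : HasDerivAt (fun x:ℝ => 3*(1 - x^2)) (3*(-(2*v))) v := by
    simpa using (((hasDerivAt_pow 2 v).const_sub 1).const_mul 3)
  have h2 : HasDerivAt (fun x:ℝ => (1 + γ*x^2)/(γ+1) + x*s) ((2*γ*v)/(γ+1) + s) v := by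
    have ha : HasDerivAt (fun x:ℝ => (1 + γ*x^2)/(γ+1)) ((2*γ*v)/(γ+1)) v := by
      have h := (((hasDerivAt_pow 2 v).const_mul γ).const_add 1).div_const (γ+1)
      exact h.congr_deriv (by simp; ring)
    have hb : HasDerivAt (fun x:ℝ => x*s) s v := by
      simpa using (hasDerivAt_id v).mul_const s
    exact ha.add hb
  have h := h1.mul h2
  exact h.congr_deriv (by unfold Nv; ring)
  all_goals try { ext x; unfold Nf; ring }
  all_goals try { unfold Nv; ring }

lemma hasDerivAt_Dq (s v : ℝ) : HasDerivAt (fun x => Dq s x) (Dv s v) v := by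
  have h1 : HasDerivAt (fun x:ℝ => (s+x)^2) (2*(s+v)) v := by
    have : HasDerivAt (fun x:ℝ => s+x) 1 v := by simpa using (hasDerivAt_id v).const_add s
    exact (this.pow 2).congr_deriv (by simp)
  have h2 : HasDerivAt (fun x:ℝ => (5/3)*(1+x*s)^2) ((5/3)*(2*(1+v*s)*s)) v := by
    have hb : HasDerivAt (fun x:ℝ => 1+x*s) s v := by
      simpa using ((hasDerivAt_id v).mul_const s).const_add 1
    have := (hb.pow 2).const_mul (5/3 : ℝ)
    exact this.congr_deriv (by ring)
  have h := h1.sub h2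
  exact h.congr_deriv (by unfold Dv; ring)
  all_goals try { ext x; unfold Dq; ring }
  all_goals try { unfold Dv; ring }

lemma hasDerivAt_Gf {s v : ℝ} (γ : ℝ) (hD : Dq s v ≠ 0) :
    HasDerivAt (fun x => Gf γ s x) (GV γ s v) v := by
  have := (hasDerivAt_Nf γ s v).div (hasDerivAt_Dq s v) hD
  exact this

/-- clamp into [-1, b] -/
def clamp (b v : ℝ) : ℝ := max (-1) (min v b)

lemma clamp_mem {b : ℝ} (hb : -1 ≤ b) (v : ℝ) : clamp b v ∈ Icc (-1 : ℝ) b := by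
  constructor
  · exact le_max_left _ _
  · exact max_le (by linarith) (min_le_right _ _)

lemma clamp_eq {b v : ℝ} (h : v ∈ Icc (-1:ℝ) b) : clamp b v = v := by
  unfold clamp
  rw [min_eq_left h.2, max_eq_right h.1]

lemma clamp_lipschitz (b x y : ℝ) : |clamp b x - clamp b y| ≤ |x - y| := by
  unfold clamp
  calc |max (-1) (min x b) - max (-1) (min y b)|
      = |max (min x b) (-1) - max (min y b) (-1)| := by rw [max_comm, max_comm (-1)]
    _ ≤ |min x b - min y b| := abs_max_sub_max_le_abs _ _ _
    _ ≤ max |x - y| |b - b| := abs_min_sub_min_le_max _ _ _ _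
    _ ≤ |x - y| := by simp



lemma field_transfer {γ Z v : ℝ} (hZ : Z ≠ 0) (hγ1 : γ+1 ≠ 0) :
    Gf γ (-Z⁻¹) v * (Z^2)⁻¹ = DelV γ Z v / DelZ Z v := by
  have hDelZ : DelZ Z v = Dq (-Z⁻¹) v * Z^3 := by
    unfold DelZ Dq; field_simp; ring
  rw [hDelZ]
  unfold Gf Nf DelV
  field_simp
  ring

set_option maxHeartbeats 1000000 in
/-- Global extension of the solution of the `(Z,V)`-ODE inside the far-field region,
with a limit `V_∞ ∈ (−1,1)` at infinity. -/
theorem far_field_extension (γ : ℝ) (hγl : (Real.sqrt (5/3))⁻¹ < γ) (hγu : γ < 1)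
    (Z₂ V₂ : ℝ) (hZ₂ : 0 < Z₂) (hfar : memOmegaFar γ Z₂ V₂) :
    ∃ V : ℝ → ℝ,
      ContDiffOn ℝ (⊤ : ℕ∞) V (Ici Z₂) ∧
      V Z₂ = V₂ ∧
      (∀ Z ∈ Ici Z₂,
        HasDerivWithinAt V (DelV γ Z (V Z) / DelZ Z (V Z)) (Ici Z₂) Z) ∧
      (∀ Z ∈ Ici Z₂, memOmegaFar γ Z (V Z)) ∧
      ∃ Vinf : ℝ, Vinf ∈ Ioo (-1 : ℝ) 1 ∧
        Filter.Tendsto V Filter.atTop (nhds Vinf) := by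
  obtain ⟨⟨hV₂m, hV₂u⟩, hZp₂, hZv₂, hVZ₂⟩ := hfar
  have hsl1 := one_lt_sl
  have hγ0 : 0 < γ := lt_trans (by positivity) hγl
  have hγ1 : (0:ℝ) < γ + 1 := by linarith
  -- choose `b` between `V₂` and `1` with the barrier inequalities still valid
  obtain ⟨b, hbV₂, hb1, hZpb, hZVb⟩ :
      ∃ b, V₂ < b ∧ b < 1 ∧ Zplus b < Z₂ ∧ ZVfun γ b < Z₂ := by
    have hVsl : V₂ + sl ≠ 0 := by nlinarith
    have hden2 : 1 + γ * V₂^2 ≠ 0 := by positivity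
    have hc1 : ContinuousAt Zplus V₂ := by
      unfold Zplus; fun_prop (disch := assumption)
    have hc2 : ContinuousAt (ZVfun γ) V₂ := by
      unfold ZVfun; fun_prop (disch := assumption)
    have h1 : ∀ᶠ x in nhds V₂, Zplus x < Z₂ := hc1.eventually_lt continuousAt_const hZp₂
    have h2 : ∀ᶠ x in nhds V₂, ZVfun γ x < Z₂ := hc2.eventually_lt continuousAt_const hZv₂
    have h3 : ∀ᶠ x in nhds V₂, x < 1 := Filter.tendsto_id.eventually_lt_const hV₂u
    have h4 : ∀ᶠ x in nhdsWithin V₂ (Ioi V₂), Zplus x < Z₂ ∧ ZVfun γ x < Z₂ ∧ x < 1 :=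
      Filter.Eventually.filter_mono nhdsWithin_le_nhds ((h1.and h2).and h3 |>.mono (by tauto))
    have h5 : ∀ᶠ x in nhdsWithin V₂ (Ioi V₂), V₂ < x := self_mem_nhdsWithin
    obtain ⟨b, hb⟩ := (h4.and h5).exists
    exact ⟨b, hb.2, hb.1.2.2, hb.1.1, hb.1.2.1⟩
  have hbm : -1 < b := lt_trans hV₂m hbV₂
  set s₂ : ℝ := -Z₂⁻¹ with hs₂def
  have hs₂0 : s₂ < 0 := by simp [hs₂def]; positivity
  -- compact rectangle and uniform bounds
  set Rc : Set (ℝ×ℝ) := Icc s₂ 0 ×ˢ Icc (-1) b with hRcdef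
  have hRcComp : IsCompact Rc := isCompact_Icc.prod isCompact_Icc
  have hDqneg : ∀ p ∈ Rc, Dq p.1 p.2 < 0 := by
    rintro ⟨s, v⟩ ⟨hps, hpv⟩
    exact Dq_neg hZ₂ hb1 hbm hZpb hps hpv
  have hcontg : ContinuousOn (fun p : ℝ×ℝ => gf γ p.1 p.2) Rc := by
    apply ContinuousOn.div
    · fun_prop
    · unfold Dq; fun_prop
    · exact fun p hp => (hDqneg p hp).ne
  have hcontG : ContinuousOn (fun p : ℝ×ℝ => Gf γ p.1 p.2) Rc := by
    apply ContinuousOn.div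
    · unfold Nf; fun_prop
    · unfold Dq; fun_prop
    · exact fun p hp => (hDqneg p hp).ne
  have hcontGV : ContinuousOn (fun p : ℝ×ℝ => GV γ p.1 p.2) Rc := by
    apply ContinuousOn.div
    · unfold Nv Nf Dq Dv; fun_prop
    · unfold Dq; fun_prop
    · exact fun p hp => pow_ne_zero 2 (hDqneg p hp).ne
  obtain ⟨K₀, hK₀⟩ := hRcComp.exists_bound_of_continuousOn hcontg
  obtain ⟨M₀, hM₀⟩ := hRcComp.exists_bound_of_continuousOn hcontG
  obtain ⟨L₀, hL₀⟩ := hRcComp.exists_bound_of_continuousOn hcontGV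
  set K : ℝ := max K₀ 0 with hKdef
  set M : ℝ := max M₀ 0 with hMdef
  set L : ℝ := max L₀ 0 with hLdef
  have hK0 : 0 ≤ K := le_max_right _ _
  have hM0 : 0 ≤ M := le_max_right _ _
  have hL0 : 0 ≤ L := le_max_right _ _
  have hKb : ∀ p ∈ Rc, |gf γ p.1 p.2| ≤ K :=
    fun p hp => le_trans (hK₀ p hp) (le_max_left _ _)
  have hMb : ∀ p ∈ Rc, |Gf γ p.1 p.2| ≤ M :=
    fun p hp => le_trans (hM₀ p hp) (le_max_left _ _)
  have hLb : ∀ p ∈ Rc, |GV γ p.1 p.2| ≤ L :=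
    fun p hp => le_trans (hL₀ p hp) (le_max_left _ _)
  -- Lipschitz bound for `Gf` in `v`
  have hlip : ∀ s ∈ Icc s₂ 0, ∀ x ∈ Icc (-1:ℝ) b, ∀ y ∈ Icc (-1:ℝ) b,
      |Gf γ s x - Gf γ s y| ≤ L * |x - y| := by
    intro s hs x hx y hy
    have := Convex.norm_image_sub_le_of_norm_hasDerivWithin_le
      (f := fun x => Gf γ s x) (f' := fun x => GV γ s x) (s := Icc (-1:ℝ) b) (C := L)
      (fun z hz => (hasDerivAt_Gf γ (hDqneg (s,z) ⟨hs,hz⟩).ne).hasDerivWithinAt)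
      (fun z hz => hLb (s,z) ⟨hs,hz⟩) (convex_Icc _ _) hy hx
    simpa [Real.norm_eq_abs] using this
  -- the clamped field
  set F : ℝ → ℝ → ℝ := fun s v => Gf γ s (clamp b v) with hFdef
  have hlipF : ∀ s ∈ Icc s₂ 0, LipschitzWith (Real.toNNReal L) (F s) := by
    intro s hs
    rw [lipschitzWith_iff_dist_le_mul]
    intro x y
    rw [Real.dist_eq, Real.dist_eq, Real.coe_toNNReal _ hL0]
    calc |F s x - F s y| ≤ L * |clamp b x - clamp b y| :=
          hlip s hs _ (clamp_mem hbm.le x) _ (clamp_mem hbm.le y)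
      _ ≤ L * |x - y| := mul_le_mul_of_nonneg_left (clamp_lipschitz b x y) hL0
  have hFb : ∀ s ∈ Icc s₂ 0, ∀ x : ℝ, |F s x| ≤ M :=
    fun s hs x => hMb (s, clamp b x) ⟨hs, clamp_mem hbm.le x⟩
  -- Picard–Lindelöf
  have hPL : IsPicardLindelof F (tmin := s₂) (tmax := 0) ⟨s₂, left_mem_Icc.2 hs₂0.le⟩ V₂
      (Real.toNNReal (M * (0 - s₂) + 1)) 0 (Real.toNNReal M) (Real.toNNReal L) :=
    { lipschitzOnWith := fun t ht => (hlipF t ht).lipschitzOnWith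
      continuousOn := by
        intro x hx
        apply ContinuousOn.div
        · unfold Nf; fun_prop
        · unfold Dq; fun_prop
        · exact fun t ht => (hDqneg (t, clamp b x) ⟨ht, clamp_mem hbm.le x⟩).ne
      norm_le := fun t ht x hx => by
        rw [Real.coe_toNNReal _ hM0, Real.norm_eq_abs]; exact hFb t ht x
      mul_max_le := by
        rw [Real.coe_toNNReal _ hM0, NNReal.coe_zero, sub_zero,
          Real.coe_toNNReal _ (by nlinarith)]
        rw [show max ((0:ℝ) - s₂) (s₂ - s₂) = 0 - s₂ by rw [max_eq_left]; linarith]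
        linarith }
  obtain ⟨W, hWinit, hWode⟩ := hPL.exists_eq_forall_mem_Icc_hasDerivWithinAt₀
  replace hWinit : W s₂ = V₂ := hWinit
  have hWcont : ContinuousOn W (Icc s₂ 0) := fun s hs => (hWode s hs).continuousWithinAt
  have hIccsub : Icc s₂ (0:ℝ) ⊆ Icc s₂ 0 := subset_rfl
  -- W is nonincreasing
  have hWanti : AntitoneOn W (Icc s₂ 0) := by
    apply antitoneOn_of_hasDerivWithinAt_nonpos (convex_Icc _ _) hWcont
      (f' := fun x => F x (W x))
    · intro x hx
      rw [interior_Icc] at hx ⊢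
      exact (hWode x (Ioo_subset_Icc_self hx)).mono Ioo_subset_Icc_self
    · intro x hx
      rw [interior_Icc] at hx
      exact Gf_nonpos hγ0 hγu hZ₂ hb1 hbm hZpb hZVb (Ioo_subset_Icc_self hx)
        (clamp_mem hbm.le _)
  have hWle : ∀ s ∈ Icc s₂ 0, W s ≤ V₂ := by
    intro s hs
    have := hWanti (left_mem_Icc.2 hs₂0.le) hs hs.1
    rwa [hWinit] at this
  -- lower barrier
  set phi : ℝ → ℝ := fun s => -1 + ((1+V₂)/2) * Real.exp (-(K+1)*(s - s₂)) with hphidef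
  have hV₂1 : (0:ℝ) < 1 + V₂ := by linarith
  have hphim : ∀ s : ℝ, -1 < phi s := by
    intro s
    have : 0 < ((1+V₂)/2) * Real.exp (-(K+1)*(s - s₂)) := by positivity
    simp only [hphidef]; linarith
  have hphilt : ∀ s ∈ Icc s₂ 0, phi s < W s := by
    by_contra hcon
    push_neg at hcon
    obtain ⟨s₀, hs₀mem, hs₀⟩ := hcon
    set T : Set ℝ := {s ∈ Icc s₂ 0 | W s ≤ phi s} with hTdef
    have hTne : T.Nonempty := ⟨s₀, hs₀mem, hs₀⟩
    have hTbdd : BddBelow T := ⟨s₂, fun x hx => hx.1.1⟩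
    have hphicont : Continuous phi := by fun_prop
    have hTclosed : IsClosed T := by
      have : T = Icc s₂ 0 ∩ (fun s => W s - phi s) ⁻¹' (Iic 0) := by
        ext x
        simp only [hTdef, mem_setOf_eq, mem_inter_iff, mem_preimage, mem_Iic, sub_nonpos]
      rw [this]
      exact ContinuousOn.preimage_isClosed_of_isClosed
        (hWcont.sub hphicont.continuousOn) isClosed_Icc isClosed_Iic
    set ss : ℝ := sInf T with hssdef
    have hssT : ss ∈ T := hTclosed.csInf_mem hTne hTbdd
    have hssmem : ss ∈ Icc s₂ 0 := hssT.1
    have hs₂notT : s₂ ∉ T := by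
      intro h
      have h1 : W s₂ ≤ phi s₂ := h.2
      rw [hWinit] at h1
      simp only [hphidef, sub_self, mul_zero, neg_zero, Real.exp_zero, mul_one] at h1
      linarith
    have hs₂ss : s₂ < ss := by
      rcases lt_or_eq_of_le (le_csInf hTne fun x hx => hx.1.1) with h | h
      · exact h
      · exact absurd (h ▸ hssT) hs₂notT
    have hlow : ∀ r ∈ Ico s₂ ss, phi r < W r := by
      intro r hr
      have hrmem : r ∈ Icc s₂ 0 := ⟨hr.1, le_trans hr.2.le hssmem.2⟩
      have : r ∉ T := fun h => absurd (csInf_le hTbdd h) (not_le.2 hr.2)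
      simp only [hTdef, mem_setOf_eq, not_and, not_le] at this
      exact this hrmem
    -- the auxiliary monotone quantity
    set u : ℝ → ℝ := fun s => (1 + W s) * Real.exp ((K+1)*(s - s₂)) with hudef
    have hIccsub2 : Icc s₂ ss ⊆ Icc s₂ 0 := Icc_subset_Icc le_rfl hssmem.2
    have humono : MonotoneOn u (Icc s₂ ss) := by
      apply monotoneOn_of_hasDerivWithinAt_nonneg (convex_Icc _ _)
        (f' := fun x => (F x (W x) + (K+1)*(1 + W x)) * Real.exp ((K+1)*(x - s₂)))
      · exact (continuousOn_const.add (hWcont.mono hIccsub2)).mul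
          (Real.continuous_exp.comp (by fun_prop)).continuousOn
      · intro x hx
        rw [interior_Icc] at hx
        have hxmem : x ∈ Icc s₂ 0 := hIccsub2 (Ioo_subset_Icc_self hx)
        have hW' : HasDerivWithinAt W (F x (W x)) (interior (Icc s₂ ss)) x := by
          rw [interior_Icc]
          exact (hWode x hxmem).mono (Ioo_subset_Icc_self.trans hIccsub2)
        have hexp : HasDerivAt (fun s : ℝ => Real.exp ((K+1)*(s - s₂)))
            (Real.exp ((K+1)*(x - s₂)) * (K+1)) x := by
          have hin : HasDerivAt (fun s : ℝ => (K+1)*(s - s₂)) (K+1) x := by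
            simpa using ((hasDerivAt_id x).sub_const s₂).const_mul (K+1)
          exact hin.exp
        have hmul := (hW'.const_add 1).mul hexp.hasDerivWithinAt
        exact hmul.congr_deriv (by ring)
      · intro x hx
        rw [interior_Icc] at hx
        have hxmem : x ∈ Icc s₂ 0 := hIccsub2 (Ioo_subset_Icc_self hx)
        have hWx1 : phi x < W x := hlow x ⟨hx.1.le, hx.2⟩
        have hWxm : -1 ≤ W x := le_of_lt (lt_trans (hphim x) hWx1)
        have hWxb : W x ∈ Icc (-1:ℝ) b :=
          ⟨hWxm, le_trans (hWle x hxmem) hbV₂.le⟩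
        have hFx : F x (W x) = (1 + W x) * gf γ x (W x) := by
          simp only [hFdef, clamp_eq hWxb]
          exact Gf_eq_one_add_mul γ x (W x)
        have hgfK : -K ≤ gf γ x (W x) := by
          have := hKb (x, W x) ⟨hxmem, hWxb⟩
          rw [abs_le] at this
          exact this.1
        have h1W : 0 ≤ 1 + W x := by linarith
        have hsum : 0 ≤ F x (W x) + (K+1)*(1 + W x) := by
          rw [hFx]
          nlinarith [mul_le_mul_of_nonneg_left hgfK h1W]
        exact mul_nonneg hsum (Real.exp_pos _).le
    have hcontr : u s₂ ≤ u ss :=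
      humono (left_mem_Icc.2 hs₂ss.le) (right_mem_Icc.2 hs₂ss.le) hs₂ss.le
    have hus₂ : u s₂ = 1 + V₂ := by
      simp only [hudef, hWinit, sub_self, mul_zero, Real.exp_zero, mul_one]
    have huss : u ss ≤ (1+V₂)/2 := by
      have h1 : 1 + W ss ≤ 1 + phi ss := by linarith [hssT.2]
      have h2 : u ss ≤ (1 + phi ss) * Real.exp ((K+1)*(ss - s₂)) :=
        mul_le_mul_of_nonneg_right h1 (Real.exp_pos _).le
      have h3 : (1 + phi ss) * Real.exp ((K+1)*(ss - s₂)) = (1+V₂)/2 := by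
        have het : Real.exp ((K+1)*(ss-s₂)) ≠ 0 := (Real.exp_pos _).ne'
        simp only [hphidef, neg_mul, Real.exp_neg]
        field_simp
        ring
      exact h2.trans h3.le
    have hfin := le_trans hcontr huss
    rw [hus₂] at hfin
    linarith
  -- consequences of the barrier
  have hWmem : ∀ s ∈ Icc s₂ 0, W s ∈ Icc (-1:ℝ) b := fun s hs =>
    ⟨(lt_trans (hphim s) (hphilt s hs)).le, le_trans (hWle s hs) hbV₂.le⟩
  have hWgt : ∀ s ∈ Icc s₂ 0, -1 < W s := fun s hs => lt_trans (hphim s) (hphilt s hs)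
  -- W solves the true ODE
  have hWode' : ∀ s ∈ Icc s₂ 0, HasDerivWithinAt W (Gf γ s (W s)) (Icc s₂ 0) s := by
    intro s hs
    have h := hWode s hs
    rwa [show F s (W s) = Gf γ s (W s) by
      simp only [hFdef, clamp_eq (hWmem s hs)]] at h
  -- smoothness bootstrap
  have huniq : UniqueDiffOn ℝ (Icc s₂ 0) := uniqueDiffOn_Icc hs₂0
  have hWsmooth : ∀ n : ℕ, ContDiffOn ℝ n W (Icc s₂ 0) := by
    intro n
    induction n with
    | zero => simpa [contDiffOn_zero] using hWcont
    | succ n ih =>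
      rw [show ((n+1 : ℕ) : WithTop ℕ∞) = (n : WithTop ℕ∞) + 1 by push_cast; ring]
      refine (contDiffOn_succ_iff_derivWithin huniq).2
        ⟨fun s hs => (hWode' s hs).differentiableWithinAt, ?_, ?_⟩
      · intro h; exact absurd h (by simp)
      · apply ContDiffOn.congr (f := fun s => Gf γ s (W s))
        · have hW2 : ContDiffOn ℝ (n:ℕ) (fun s => (W s)^2) (Icc s₂ 0) := ih.pow 2
          have hnum : ContDiffOn ℝ (n:ℕ) (fun s => Nf γ s (W s)) (Icc s₂ 0) := by
            have h : ContDiffOn ℝ (n:ℕ) (fun s => 3 * (1 - (W s)^2) *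
                ((1 + γ*(W s)^2)/(γ+1) + (W s)*s)) (Icc s₂ 0) :=
              (contDiffOn_const.mul (contDiffOn_const.sub hW2)).mul
                (((contDiffOn_const.add (contDiffOn_const.mul hW2)).div_const (γ+1)).add
                  (ih.mul contDiffOn_id))
            exact h
          have hden : ContDiffOn ℝ (n:ℕ) (fun s => Dq s (W s)) (Icc s₂ 0) := by
            have h : ContDiffOn ℝ (n:ℕ) (fun s => (s + W s)^2 - (5/3)*(1 + (W s)*s)^2)
                (Icc s₂ 0) :=
              ((contDiffOn_id.add ih).pow 2).sub
                (contDiffOn_const.mul ((contDiffOn_const.add (ih.mul contDiffOn_id)).pow 2))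
            exact h
          exact hnum.div hden (fun s hs => (hDqneg (s, W s) ⟨hs, hWmem s hs⟩).ne)
        · exact fun s hs => (hWode' s hs).derivWithin (huniq s hs)
  have hWtop : ContDiffOn ℝ (⊤:ℕ∞) W (Icc s₂ 0) := contDiffOn_infty.2 hWsmooth
  -- back to the Z variable
  have hmaps : MapsTo (fun Z : ℝ => -Z⁻¹) (Ici Z₂) (Icc s₂ 0) := by
    intro Z hZ
    have hZ0 : 0 < Z := lt_of_lt_of_le hZ₂ hZ
    constructor
    · have h : Z⁻¹ ≤ Z₂⁻¹ := by
        rw [inv_le_inv₀ hZ0 hZ₂]; exact hZ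
      simp only [hs₂def]; linarith
    · simp only [neg_nonpos]; positivity
  have h0mem : (0:ℝ) ∈ Icc s₂ 0 := right_mem_Icc.2 hs₂0.le
  refine ⟨fun Z => W (-Z⁻¹), ?_, ?_, ?_, ?_, ?_⟩
  · -- smoothness
    have hinner_top : ContDiffOn ℝ (⊤:ℕ∞) (fun Z : ℝ => -Z⁻¹) (Ici Z₂) := by
      apply ContDiffOn.neg
      exact ContDiffOn.inv contDiffOn_id
        (fun z hz => (lt_of_lt_of_le hZ₂ hz).ne')
    exact hWtop.comp hinner_top hmaps
  · show W (-Z₂⁻¹) = V₂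
    rw [← hs₂def]; exact hWinit
  · intro Z hZm
    have hZ0 : 0 < Z := lt_of_lt_of_le hZ₂ hZm
    have hsm : -Z⁻¹ ∈ Icc s₂ 0 := hmaps hZm
    have hinner : HasDerivWithinAt (fun z : ℝ => -z⁻¹) ((Z^2)⁻¹) (Ici Z₂) Z := by
      have h := (hasDerivAt_inv hZ0.ne').neg
      exact h.hasDerivWithinAt.congr_deriv (by simp)
    have hcomp := (hWode' _ hsm).comp Z hinner hmaps
    have heq : Gf γ (-Z⁻¹) (W (-Z⁻¹)) * (Z^2)⁻¹
        = DelV γ Z (W (-Z⁻¹)) / DelZ Z (W (-Z⁻¹)) := field_transfer hZ0.ne' hγ1.ne'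
    have hcomp' : HasDerivWithinAt (fun Z : ℝ => W (-Z⁻¹))
        (Gf γ (-Z⁻¹) (W (-Z⁻¹)) * (Z^2)⁻¹) (Ici Z₂) Z := hcomp
    rw [heq] at hcomp'
    exact hcomp'
  · intro Z hZm
    have hZ0 : 0 < Z := lt_of_lt_of_le hZ₂ hZm
    have hsm : -Z⁻¹ ∈ Icc s₂ 0 := hmaps hZm
    have hvm : W (-Z⁻¹) ∈ Icc (-1:ℝ) b := hWmem _ hsm
    have hv1 : -1 < W (-Z⁻¹) := hWgt _ hsm
    have hvV₂ : W (-Z⁻¹) ≤ V₂ := hWle _ hsm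
    refine ⟨⟨hv1, lt_of_le_of_lt hvV₂ hV₂u⟩, ?_, ?_, ?_⟩
    · have hB := B_pos hZ₂ hb1 hbm hZpb hsm hvm
      have hvsl : 0 < W (-Z⁻¹) + sl := by nlinarith [one_lt_sl]
      unfold Zplus
      rw [div_lt_iff₀ hvsl]
      have hkey : 0 < Z * ((-Z⁻¹)*(1+sl*(W (-Z⁻¹))) + ((W (-Z⁻¹))+sl)) := mul_pos hZ0 hB
      have hexp : Z * ((-Z⁻¹)*(1+sl*(W (-Z⁻¹))) + ((W (-Z⁻¹))+sl))
          = Z*((W (-Z⁻¹))+sl) - (1+sl*(W (-Z⁻¹))) := by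
        field_simp
        ring
      rw [hexp] at hkey
      linarith
    · have hc := cvs_pos hγ0 hγu hZ₂ hb1 hZVb hsm hvm
      unfold ZVfun
      rw [div_lt_iff₀ (by positivity)]
      have hkey : 0 < (Z * (γ+1)) * ((1 + γ*(W (-Z⁻¹))^2)/(γ+1) + (W (-Z⁻¹))*(-Z⁻¹)) :=
        mul_pos (mul_pos hZ0 hγ1) hc
      have hexp : (Z * (γ+1)) * ((1 + γ*(W (-Z⁻¹))^2)/(γ+1) + (W (-Z⁻¹))*(-Z⁻¹))
          = Z*(1 + γ*(W (-Z⁻¹))^2) - (γ+1)*(W (-Z⁻¹)) := by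
        field_simp
        ring
      rw [hexp] at hkey
      linarith
    · exact lt_of_le_of_lt hvV₂ (lt_of_lt_of_le hVZ₂ hZm)
  · refine ⟨W 0, ⟨hWgt 0 h0mem, lt_of_le_of_lt (hWle 0 h0mem) hV₂u⟩, ?_⟩
    have h1 : Filter.Tendsto (fun Z : ℝ => -Z⁻¹) Filter.atTop (nhds 0) := by
      simpa using (tendsto_inv_atTop_zero (𝕜 := ℝ)).neg
    have h2 : ∀ᶠ Z in Filter.atTop, (fun Z : ℝ => -Z⁻¹) Z ∈ Icc s₂ 0 :=
      (Filter.eventually_ge_atTop Z₂).mono (fun Z hZ => hmaps hZ)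
    have h3 : Filter.Tendsto (fun Z : ℝ => -Z⁻¹) Filter.atTop (nhdsWithin 0 (Icc s₂ 0)) :=
      tendsto_nhdsWithin_iff.2 ⟨h1, h2⟩
    exact Filter.Tendsto.comp (hWcont 0 h0mem) h3




end Stmt19
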